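/- Let $(w_t)$ be real numbers satisfying $w_t = (\alpha-\beta)w_{t-1} - \beta(\alpha-\beta)w_{t-2} + \beta^3 w_{t-3} + L_{t-1} + \beta L_{t-2}$ for $t \geq 3$, with $w_0 = L_0$, $w_1 = \frac{\alpha}{4} L_0$, $w_2 = (\frac{\alpha}{2}-\beta)^2 L_0 + L_1$. Then for all $t \geq 1$, $w_t = p_t(\alpha,\beta) L_0 + \sum_{r=1}^{t-1} q_{t-r-1}(\alpha,\beta) L_r$, where $p_t, q_t$ are the recurrence polynomials $p_0=1, p_1=\alpha/4, p_2=(\alpha/2-\beta)^2$; $q_0=1, q_1=\alpha, q_2=(\alpha-\beta)^2$; both satisfying $x_t = (\alpha-\beta)x_{t-1} - \beta(\alpha-\beta)x_{t-2} + \beta^3 x_{t-3}$. -/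
import Mathlib


theorem stmt_10 (α β : ℝ) (L : ℕ → ℝ)
    (p q : ℕ → ℝ)
    (hp0 : p 0 = 1) (hp1 : p 1 = α / 4) (hp2 : p 2 = (α / 2 - β) ^ 2)
    (hprec : ∀ t, p (t + 3) =
      (α - β) * p (t + 2) - β * (α - β) * p (t + 1) + β ^ 3 * p t)
    (hq0 : q 0 = 1) (hq1 : q 1 = α) (hq2 : q 2 = (α - β) ^ 2)
    (hqrec : ∀ t, q (t + 3) =
      (α - β) * q (t + 2) - β * (α - β) * q (t + 1) + β ^ 3 * q t)
    (w : ℕ → ℝ)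
    (hw0 : w 0 = L 0) (hw1 : w 1 = (α / 4) * L 0)
    (hw2 : w 2 = (α / 2 - β) ^ 2 * L 0 + L 1)
    (hwrec : ∀ t, w (t + 3) =
      (α - β) * w (t + 2) - β * (α - β) * w (t + 1) + β ^ 3 * w t
        + L (t + 2) + β * L (t + 1)) :
    ∀ t, 1 ≤ t → w t = p t * L 0 + ∑ r ∈ Finset.Ico 1 t, q (t - r - 1) * L r := by
  have key : ∀ t, w t = p t * L 0 + ∑ r ∈ Finset.Ico 1 t, q (t - r - 1) * L r := by
    intro t
    induction t using Nat.strong_induction_on with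
    | _ t ih =>
      match t with
      | 0 => simpa [hp0] using hw0
      | 1 => simp [hw1, hp1]
      | 2 =>
        rw [hw2, show Finset.Ico 1 2 = {1} from rfl]
        simp [hp2, hq0]
      | 3 =>
        have h := hwrec 0
        rw [hw0, hw1, hw2] at h
        rw [h, hprec 0, hp0, hp1, hp2,
          show Finset.Ico 1 3 = {1, 2} from rfl]
        simp [hq0, hq1]
        ring
      | (t+4) =>
        rw [hwrec (t+1), ih (t+3) (by omega), ih (t+2) (by omega),
          ih (t+1) (by omega), hprec (t+1)]
        simp only [Finset.sum_Ico_succ_top (show (1:ℕ) ≤ t+3 by omega),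
          Finset.sum_Ico_succ_top (show (1:ℕ) ≤ t+2 by omega),
          Finset.sum_Ico_succ_top (show (1:ℕ) ≤ t+1 by omega)]
        simp only [show t+4-(t+3)-1 = 0 from by omega,
          show t+4-(t+2)-1 = 1 from by omega,
          show t+4-(t+1)-1 = 2 from by omega,
          show t+3-(t+2)-1 = 0 from by omega,
          show t+3-(t+1)-1 = 1 from by omega,
          show t+2-(t+1)-1 = 0 from by omega, hq0, hq1, hq2]
        have hr : ∀ r ∈ Finset.Ico 1 (t+1),
            q (t+4-r-1) * L r =
              (α-β) * (q (t+3-r-1) * L r) - β*(α-β) * (q (t+2-r-1) * L r)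
                + β^3 * (q (t+1-r-1) * L r) := by
          intro r hrr
          simp only [Finset.mem_Ico] at hrr
          rw [show t+4-r-1 = (t-r)+3 from by omega,
            show t+3-r-1 = (t-r)+2 from by omega,
            show t+2-r-1 = (t-r)+1 from by omega,
            show t+1-r-1 = t-r from by omega, hqrec (t-r)]
          ring
        rw [Finset.sum_congr rfl hr]
        simp only [Finset.sum_add_distrib, Finset.sum_sub_distrib,
          ← Finset.mul_sum]
        ring
  intro t _
  exact key t
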